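/- The filled graph produced by the elimination game is chordal: if G is a graph and α an ordering of its vertices, and at each step i the neighborhood of the i-th vertex in the current graph is turned into a clique and the vertex is deleted, then the graph G⁺_α obtained by adding all fill edges to G is chordal. -/

import Mathlib

/-- A graph is chordal if every cycle of length greater than 3 has a chord. -/
def IsChordal {V : Type*} (G : SimpleGraph V) : Prop :=
  ∀ (u : V) (c : G.Walk u u), c.IsCycle → 3 < c.length →
    ∃ x y, x ∈ c.support ∧ y ∈ c.support ∧ G.Adj x y ∧ s(x, y) ∉ c.edges

/-- Complete the neighborhood of `v` into a clique (adding the fill edges of the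
elimination step at `v`). -/
def fillStep {V : Type*} (G : SimpleGraph V) (v : V) : SimpleGraph V :=
  G ⊔ SimpleGraph.fromRel (fun a b => G.Adj v a ∧ G.Adj v b)

/-- Delete the vertex `v` (remove all edges incident to `v`). -/
def eraseVertex {V : Type*} (G : SimpleGraph V) (v : V) : SimpleGraph V :=
  G.deleteEdges {e | v ∈ e}

/-- The filled graph `G⁺_α` of the elimination game on `G` with elimination order
given by the list `L`: at each step the neighborhood of the current vertex is turned
into a clique and the vertex is deleted; the filled graph consists of the original
edges together with all fill edges introduced during the process. -/
def filledGraph {V : Type*} : SimpleGraph V → List V → SimpleGraph V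
  | G, [] => G
  | G, v :: L => G ⊔ filledGraph (eraseVertex (fillStep G v) v) L

section Aux

variable {V : Type*}

open SimpleGraph Walk

lemma le_filledGraph : ∀ (L : List V) (G : SimpleGraph V), G ≤ filledGraph G L
  | [], G => le_rfl
  | v :: L, G => by
      simp only [filledGraph]
      exact le_sup_left

lemma isolated_filledGraph : ∀ (L : List V) (G : SimpleGraph V) (v : V),
    (∀ x, ¬ G.Adj v x) → ∀ x, ¬ (filledGraph G L).Adj v x
  | [], G, v, h, x => h x
  | w :: L, G, v, h, x => by
      simp only [filledGraph, SimpleGraph.sup_adj]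
      push_neg
      refine ⟨h x, ?_⟩
      refine isolated_filledGraph L _ v ?_ x
      intro y
      simp only [eraseVertex, SimpleGraph.deleteEdges_adj, fillStep, SimpleGraph.sup_adj,
        SimpleGraph.fromRel_adj]
      rintro ⟨hadj | ⟨-, ⟨hw, -⟩ | ⟨-, hw⟩⟩, -⟩
      · exact h y hadj
      · exact h w hw.symm
      · exact h w hw.symm

/-- In a path (walk with nodup support) from `b` to `a`, if the edge `s(a,b)` occurs
then the walk has length 1. -/
lemma length_eq_one_of_edge {G : SimpleGraph V} {a b : V} (q : G.Walk b a)
    (hnd : q.support.Nodup) (he : s(a, b) ∈ q.edges) : q.length = 1 := by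
  cases q with
  | nil => simp at he
  | @cons _ x _ h r =>
    simp only [Walk.edges_cons, List.mem_cons] at he
    rcases he with he | he
    · rw [Sym2.eq_iff] at he
      rcases he with ⟨rfl, rfl⟩ | ⟨rfl, -⟩
      · exact absurd h (G.irrefl)
      · have hr : r.support.Nodup := by
          simpa using hnd.of_cons
        have : r = Walk.nil := (Walk.isPath_iff_eq_nil (p := r)).mp ((Walk.isPath_def r).mpr hr)
        subst this
        simp
    · exfalso
      have hb : b ∈ r.support := r.snd_mem_support_of_mem_edges he
      simp only [Walk.support_cons, List.nodup_cons] at hnd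
      exact hnd.1 hb

/-- A cycle of length > 3 based at `v` has a "chord candidate": the two cycle-neighbors
of `v` are distinct, adjacent to `v`, lie in the tail of the support, and the edge
between them is not an edge of the cycle. -/
lemma exists_chord_ends {H : SimpleGraph V} {v : V} (c : H.Walk v v)
    (hc : c.IsCycle) (hl : 3 < c.length) :
    ∃ a b, a ∈ c.support.tail ∧ b ∈ c.support.tail ∧ a ≠ b ∧
      H.Adj v a ∧ H.Adj v b ∧ s(a, b) ∉ c.edges := by
  cases c with
  | nil => simp at hl
  | @cons _ a _ h p =>
    have hcyc := (Walk.cons_isCycle_iff p h).mp hc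
    have hp : p.support.Nodup := (Walk.isPath_def p).mp hcyc.1
    cases hpr : p.reverse with
    | nil =>
      exfalso
      have : p = Walk.nil := by
        have := congrArg Walk.reverse hpr
        simpa using this
      subst this
      exact H.irrefl h
    | @cons _ b _ h' q =>
      -- h' : H.Adj v b, q : H.Walk b a, p.reverse = cons h' q
      have hpsupp : p.support.reverse = v :: q.support := by
        rw [← Walk.support_reverse, hpr, Walk.support_cons]
      have hpedges : p.edges.reverse = s(v, b) :: q.edges := by
        rw [← Walk.edges_reverse, hpr, Walk.edges_cons]
      have hvq : (v :: q.support).Nodup := by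
        rw [← hpsupp]
        exact List.nodup_reverse.mpr hp
      have hqnd : q.support.Nodup := hvq.of_cons
      have hplen : p.length = q.length + 1 := by
        rw [← Walk.length_reverse, hpr, Walk.length_cons]
      have hql : 2 ≤ q.length := by
        simp only [Walk.length_cons, hplen] at hl
        omega
      have hva : v ≠ a := h.ne
      have hvb : v ≠ b := h'.ne
      have hab : a ≠ b := by
        rintro rfl
        have : q = Walk.nil := (Walk.isPath_iff_eq_nil (p := q)).mp ((Walk.isPath_def q).mpr hqnd)
        subst this
        simp at hql
      have hbq : b ∈ q.support := q.start_mem_support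
      refine ⟨a, b, ?_, ?_, hab, h, h', ?_⟩
      · simpa using p.start_mem_support
      · have : b ∈ p.support.reverse := by rw [hpsupp]; simp [hbq]
        simpa using this
      · -- s(a,b) not an edge of the cycle
        simp only [Walk.edges_cons, List.mem_cons]
        push_neg
        constructor
        · intro heq
          rw [Sym2.eq_iff] at heq
          rcases heq with ⟨h1, -⟩ | ⟨-, h2⟩
          · exact hva h1.symm
          · exact hvb h2.symm
        · intro hmem
          have hmem' : s(a, b) ∈ p.edges.reverse := by simpa using hmem
          rw [hpedges] at hmem'
          rcases List.mem_cons.mp hmem' with heq | hmem''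
          · rw [Sym2.eq_iff] at heq
            rcases heq with ⟨rfl, -⟩ | ⟨rfl, rfl⟩
            · exact hva rfl
            · exact hab rfl
          · have := length_eq_one_of_edge q hqnd hmem''
            omega

lemma filledGraph_chordal_aux : ∀ (L : List V) (G : SimpleGraph V),
    (∀ w, w ∉ L → ∀ x, ¬ G.Adj w x) → IsChordal (filledGraph G L)
  | [], G, hiso => by
      intro u c hc hl
      exfalso
      cases c with
      | nil => simp at hl
      | cons h p => exact hiso u (by simp) _ h
  | v :: L, G, hiso => by
      set G' := eraseVertex (fillStep G v) v with hG'
      have hiso' : ∀ w, w ∉ L → ∀ x, ¬ G'.Adj w x := by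
        intro w hw x
        by_cases hwv : w = v
        · subst hwv
          simp only [hG', eraseVertex, SimpleGraph.deleteEdges_adj]
          rintro ⟨-, hmem⟩
          exact hmem (by simp)
        · have hwL : w ∉ v :: L := by simp [hwv, hw]
          have hGw := hiso w hwL
          simp only [hG', eraseVertex, SimpleGraph.deleteEdges_adj, fillStep,
            SimpleGraph.sup_adj, SimpleGraph.fromRel_adj]
          rintro ⟨hadj | ⟨-, ⟨hvw, -⟩ | ⟨-, hvw⟩⟩, -⟩
          · exact hGw x hadj
          · exact hGw v hvw.symm
          · exact hGw v hvw.symm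
      set F := filledGraph G' L with hF
      have hFchord : IsChordal F := filledGraph_chordal_aux L G' hiso'
      have hFiso : ∀ x, ¬ F.Adj v x := by
        refine isolated_filledGraph L G' v ?_
        intro y
        simp only [hG', eraseVertex, SimpleGraph.deleteEdges_adj]
        rintro ⟨-, hmem⟩
        exact hmem (by simp)
      have hH : filledGraph G (v :: L) = G ⊔ F := rfl
      rw [hH]
      set H := G ⊔ F with hHdef
      have hG'leF : G' ≤ F := le_filledGraph L G'
      -- an edge of G avoiding v is an edge of F
      have hGF : ∀ x y, x ≠ v → y ≠ v → G.Adj x y → F.Adj x y := by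
        intro x y hx hy hadj
        apply hG'leF
        simp only [hG', eraseVertex, SimpleGraph.deleteEdges_adj, fillStep,
          SimpleGraph.sup_adj, Set.mem_setOf_eq, Sym2.mem_iff]
        exact ⟨Or.inl hadj, by rintro (rfl | rfl); exacts [hx rfl, hy rfl]⟩
      intro u c hc hl
      classical
      by_cases hv : v ∈ c.support
      · -- rotate the cycle to start at v
        set rot := c.rotate v hv with hrot
        have hrc : rot.IsCycle := hc.rotate hv
        have hedgerot : rot.edges ~r c.edges := c.rotate_edges v hv
        have hrl : 3 < rot.length := by
          have : rot.edges.length = c.edges.length := hedgerot.perm.length_eq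
          rw [Walk.length_edges, Walk.length_edges] at this
          omega
        obtain ⟨a, b, ha, hb, hab, hva, hvb, hne⟩ := exists_chord_ends rot hrc hrl
        have hsupprot := c.support_rotate v hv
        have haC : a ∈ c.support := List.mem_of_mem_tail (hsupprot.mem_iff.mp ha)
        have hbC : b ∈ c.support := List.mem_of_mem_tail (hsupprot.mem_iff.mp hb)
        -- v's neighbors in H are its neighbors in G
        have hGva : G.Adj v a := by
          rcases hva with hva | hva
          · exact hva
          · exact absurd hva (hFiso a)
        have hGvb : G.Adj v b := by
          rcases hvb with hvb | hvb
          · exact hvb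
          · exact absurd hvb (hFiso b)
        have hadj : H.Adj a b := by
          apply le_sup_right (a := G) (b := F)
          apply hG'leF
          simp only [hG', eraseVertex, SimpleGraph.deleteEdges_adj, fillStep,
            SimpleGraph.sup_adj, SimpleGraph.fromRel_adj, Set.mem_setOf_eq, Sym2.mem_iff]
          refine ⟨Or.inr ⟨hab, Or.inl ⟨hGva, hGvb⟩⟩, ?_⟩
          rintro (rfl | rfl)
          · exact G.irrefl hGva
          · exact G.irrefl hGvb
        exact ⟨a, b, haC, hbC, hadj, fun hmem => hne (hedgerot.mem_iff.mpr hmem)⟩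
      · -- the cycle avoids v, so it lives in F
        have hedges : ∀ e ∈ c.edges, e ∈ F.edgeSet := by
          intro e he
          induction e using Sym2.ind with
          | _ x y =>
            have hx : x ∈ c.support := c.fst_mem_support_of_mem_edges he
            have hy : y ∈ c.support := c.snd_mem_support_of_mem_edges he
            have hxv : x ≠ v := fun h => hv (h ▸ hx)
            have hyv : y ≠ v := fun h => hv (h ▸ hy)
            have hadj : H.Adj x y := c.adj_of_mem_edges he
            rw [SimpleGraph.mem_edgeSet]
            rcases hadj with hadj | hadj
            · exact hGF x y hxv hyv hadj
            · exact hadj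
        set c' := c.transfer F hedges with hc'
        have hc'cyc : c'.IsCycle := hc.transfer hedges
        have hc'len : 3 < c'.length := by
          rw [hc', Walk.length_transfer]; exact hl
        obtain ⟨x, y, hx, hy, hadj, hne⟩ := hFchord u c' hc'cyc hc'len
        rw [hc', Walk.support_transfer] at hx hy
        rw [hc', Walk.edges_transfer] at hne
        exact ⟨x, y, hx, hy, le_sup_right (a := G) (b := F) hadj, hne⟩

end Aux

/-- The filled graph produced by the elimination game on `G`, processing all vertices
in the order of a list `L` enumerating the vertices, is chordal. -/
theorem filledGraph_isChordal {V : Type*} [Fintype V] (G : SimpleGraph V)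
    (L : List V) (hnd : L.Nodup) (hall : ∀ v : V, v ∈ L) :
    IsChordal (filledGraph G L) :=
  filledGraph_chordal_aux L G (fun w hw _ _ => hw (hall w))
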